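/- Let 1 ≤ i < k and let a₀ = (i+1)/(n+1), b₀ = (n-i)/(n+1), and for fixed t with −b₀ < t < a₀ set a = a₀ − t. Then lim_{ε→0⁺} [∫₀^{εa₀} r₁^{i-1} ∫₀^{b₀} r₂^{k-i-1}(r₁²+r₂²)^{(i-k)/2} dr₂ dr₁] / [∫₀^{εa} r₁^{i-1} ∫₀^{b} r₂^{k-i-1}(r₁²+r₂²)^{(i-k)/2} dr₂ dr₁] = (a₀/a)^i, where b = b₀ + t. -/

import Mathlib

open MeasureTheory Real Filter

lemma rpow_anti {x y c : ℝ} (hx : 0 < x) (hxy : x ≤ y) (hc : c ≤ 0) : y ^ c ≤ x ^ c := by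
  have hy : 0 < y := lt_of_lt_of_le hx hxy
  rw [show c = -(-c) by ring, Real.rpow_neg hy.le, Real.rpow_neg hx.le]
  apply inv_anti₀ (Real.rpow_pos_of_pos hx _)
  exact Real.rpow_le_rpow hx.le hxy (by linarith)

lemma sq_rpow {σ : ℝ} (hσ : 0 ≤ σ) (e : ℝ) : (σ ^ 2) ^ e = σ ^ (2 * e) := by
  rw [← Real.rpow_natCast σ 2, ← Real.rpow_mul hσ]
  norm_num

noncomputable def sdiPhi (q : ℕ) (σ : ℝ) : ℝ := σ ^ q * (1 + σ ^ 2) ^ (-((q : ℝ) + 1) / 2)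

lemma sdiPhi_cont (q : ℕ) : Continuous (sdiPhi q) := by
  apply (continuous_pow q).mul
  apply Continuous.rpow_const (by continuity)
  intro x
  left
  positivity

lemma sdiPhi_nonneg (q : ℕ) {σ : ℝ} (hσ : 0 ≤ σ) : 0 ≤ sdiPhi q σ := by
  unfold sdiPhi
  positivity

noncomputable def sdiH (q : ℕ) (T : ℝ) : ℝ := ∫ σ in (0:ℝ)..T, sdiPhi q σ

lemma sdiH_cont (q : ℕ) : Continuous (sdiH q) :=
  intervalIntegral.continuous_primitive (fun a b => ((sdiPhi_cont q).intervalIntegrable a b)) 0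

lemma sdiH_nonneg (q : ℕ) {T : ℝ} (hT : 0 ≤ T) : 0 ≤ sdiH q T :=
  intervalIntegral.integral_nonneg hT (fun σ hσ => sdiPhi_nonneg q hσ.1)

lemma sdiH_le (q : ℕ) {T : ℝ} (hT : 1 ≤ T) : sdiH q T ≤ Real.log T + 1 / (q + 1) := by
  have h01 : IntervalIntegrable (sdiPhi q) volume 0 1 := (sdiPhi_cont q).intervalIntegrable _ _
  have h1T : IntervalIntegrable (sdiPhi q) volume 1 T := (sdiPhi_cont q).intervalIntegrable _ _
  have hsplit : sdiH q T = (∫ σ in (0:ℝ)..1, sdiPhi q σ) + ∫ σ in (1:ℝ)..T, sdiPhi q σ := by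
    rw [sdiH, ← intervalIntegral.integral_add_adjacent_intervals h01 h1T]
  have hb1 : (∫ σ in (0:ℝ)..1, sdiPhi q σ) ≤ 1 / (q + 1) := by
    have h : (∫ σ in (0:ℝ)..1, sdiPhi q σ) ≤ ∫ σ in (0:ℝ)..1, σ ^ q := by
      apply intervalIntegral.integral_mono_on zero_le_one h01
        ((continuous_pow q).intervalIntegrable _ _)
      intro σ hσ
      have h1 : (1 + σ ^ 2) ^ (-((q : ℝ) + 1) / 2) ≤ 1 := by
        apply Real.rpow_le_one_of_one_le_of_nonpos (by nlinarith [hσ.1])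
        have hq : (0:ℝ) ≤ (q:ℝ) + 1 := by positivity
        linarith
      calc sdiPhi q σ ≤ σ ^ q * 1 := mul_le_mul_of_nonneg_left h1 (pow_nonneg hσ.1 q)
        _ = σ ^ q := mul_one _
    rw [integral_pow] at h
    simpa using h
  have hb2 : (∫ σ in (1:ℝ)..T, sdiPhi q σ) ≤ Real.log T := by
    have h0T : (0:ℝ) ∉ Set.uIcc (1:ℝ) T := by
      rw [Set.uIcc_of_le hT]
      intro h
      exact absurd h.1 (by norm_num)
    have h : (∫ σ in (1:ℝ)..T, sdiPhi q σ) ≤ ∫ σ in (1:ℝ)..T, σ⁻¹ := by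
      apply intervalIntegral.integral_mono_on hT h1T
        (intervalIntegral.intervalIntegrable_inv (f := fun x => x) (fun x hx => by
          rintro rfl; exact h0T hx) continuousOn_id)
      intro σ hσ
      have hσ1 : 1 ≤ σ := hσ.1
      have hσ0 : 0 < σ := lt_of_lt_of_le one_pos hσ1
      have key : (1 + σ ^ 2) ^ (-((q : ℝ) + 1) / 2) ≤ (σ ^ 2) ^ (-((q : ℝ) + 1) / 2) :=
        rpow_anti (by positivity) (by linarith)
          (by have : (0:ℝ) ≤ (q:ℝ) := Nat.cast_nonneg q; linarith)
      have h2 : (σ ^ 2) ^ (-((q : ℝ) + 1) / 2) = σ ^ (-((q:ℝ) + 1)) := by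
        rw [sq_rpow hσ0.le]; ring_nf
      calc sdiPhi q σ ≤ σ ^ q * σ ^ (-((q:ℝ) + 1)) := by
            rw [← h2]; exact mul_le_mul_of_nonneg_left key (pow_nonneg hσ0.le q)
        _ = σ⁻¹ := by
            rw [← Real.rpow_natCast σ q, ← Real.rpow_add hσ0, ← Real.rpow_neg_one]
            norm_num
    rw [integral_inv h0T] at h
    simpa using h
  rw [hsplit]; linarith

lemma sdiH_ge (q : ℕ) {T : ℝ} (hT : 1 ≤ T) : Real.log T - q ≤ sdiH q T := by
  have hT0 : (0:ℝ) < T := lt_of_lt_of_le one_pos hT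
  set f' : ℝ → ℝ := fun σ => 1 / (1 + σ) - q / (1 + σ) ^ 2 with hf'
  have hcont : ContinuousOn f' (Set.uIcc 0 T) := by
    rw [Set.uIcc_of_le hT0.le]
    apply ContinuousOn.sub
    · apply ContinuousOn.div continuousOn_const (by fun_prop)
      intro x hx; nlinarith [hx.1]
    · apply ContinuousOn.div continuousOn_const (by fun_prop)
      intro x hx; nlinarith [hx.1]
  have hint : IntervalIntegrable f' volume 0 T := hcont.intervalIntegrable
  have hftc : (∫ σ in (0:ℝ)..T, f' σ)
      = (Real.log (1 + T) + q / (1 + T)) - (Real.log (1 + 0) + q / (1 + 0)) := by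
    apply intervalIntegral.integral_eq_sub_of_hasDerivAt
      (f := fun σ => Real.log (1 + σ) + q / (1 + σ)) _ hint
    intro x hx
    rw [Set.uIcc_of_le hT0.le] at hx
    have hx0 : (0:ℝ) < 1 + x := by nlinarith [hx.1]
    have h1 : HasDerivAt (fun σ : ℝ => Real.log (1 + σ)) (1 / (1 + x)) x := by
      have := ((hasDerivAt_id x).const_add 1).log (ne_of_gt hx0)
      simpa using this
    have h2 : HasDerivAt (fun σ : ℝ => (q:ℝ) / (1 + σ)) (-(q / (1 + x) ^ 2)) x := by
      have := (((hasDerivAt_id x).const_add 1).inv (ne_of_gt hx0)).const_mul (q:ℝ)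
      simpa [div_eq_mul_inv, mul_comm, neg_div, mul_div_assoc] using this
    have h3 := h1.add h2
    refine h3.congr_deriv ?_
    simp only [hf']
    ring
  have hmono : (∫ σ in (0:ℝ)..T, f' σ) ≤ ∫ σ in (0:ℝ)..T, sdiPhi q σ := by
    apply intervalIntegral.integral_mono_on hT0.le hint
      ((sdiPhi_cont q).intervalIntegrable _ _)
    intro σ hσ
    have hσ0 : 0 ≤ σ := hσ.1
    have hu : (1:ℝ) ≤ 1 + σ := by linarith
    have hu0 : (0:ℝ) < 1 + σ := by linarith
    -- Bernoulli : 1 - q/(1+σ) ≤ (σ/(1+σ))^q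
    have hbern : 1 - (q:ℝ) / (1 + σ) ≤ (σ / (1 + σ)) ^ q := by
      have hle1 : 1/(1+σ) ≤ 1 := by rw [div_le_one hu0]; linarith
      have := one_add_mul_le_pow (a := -(1/(1+σ))) (by linarith) q
      have heq : (1 + -(1/(1+σ))) = σ / (1+σ) := by field_simp; ring
      rw [heq] at this
      calc 1 - (q:ℝ)/(1+σ) = 1 + q * (-(1/(1+σ))) := by ring
        _ ≤ _ := this
    have hstep1 : 1 / (1 + σ) - (q:ℝ) / (1 + σ) ^ 2 ≤ σ ^ q / (1 + σ) ^ (q + 1) := by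
      calc 1 / (1 + σ) - (q:ℝ) / (1 + σ) ^ 2 = (1 - (q:ℝ)/(1+σ))/(1+σ) := by
            field_simp
        _ ≤ (σ/(1+σ))^q/(1+σ) := by gcongr
        _ = σ ^ q / (1 + σ) ^ (q + 1) := by rw [div_pow, div_div, ← pow_succ]
    have hstep2 : σ ^ q / (1 + σ) ^ (q + 1) ≤ sdiPhi q σ := by
      have key : ((1 + σ) ^ (q+1) : ℝ)⁻¹ ≤ (1 + σ ^ 2) ^ (-((q : ℝ) + 1) / 2) := by
        have h1 : (1 + σ ^ 2) ^ (-((q : ℝ) + 1) / 2) ≥ ((1+σ) ^ 2) ^ (-((q : ℝ) + 1) / 2) :=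
          rpow_anti (by positivity) (by nlinarith)
            (by have : (0:ℝ) ≤ (q:ℝ) := Nat.cast_nonneg q; linarith)
        have h2 : (((1+σ) : ℝ) ^ 2) ^ (-((q : ℝ) + 1) / 2) = ((1+σ):ℝ) ^ (-((q:ℝ) + 1)) := by
          rw [sq_rpow hu0.le]; ring_nf
        rw [h2] at h1
        have h3 : ((1+σ):ℝ) ^ (-((q:ℝ) + 1)) = ((1 + σ) ^ (q+1) : ℝ)⁻¹ := by
          rw [Real.rpow_neg hu0.le, show ((q:ℝ) + 1) = ((q + 1 : ℕ) : ℝ) by push_cast; ring,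
            Real.rpow_natCast]
        rw [h3] at h1
        exact h1
      calc σ ^ q / (1 + σ) ^ (q + 1) = σ ^ q * ((1 + σ) ^ (q+1) : ℝ)⁻¹ := div_eq_mul_inv _ _
        _ ≤ sdiPhi q σ := mul_le_mul_of_nonneg_left key (pow_nonneg hσ0 q)
    show 1 / (1 + σ) - (q:ℝ) / (1 + σ) ^ 2 ≤ sdiPhi q σ
    exact le_trans hstep1 hstep2
  have hlog : Real.log T ≤ Real.log (1 + T) := Real.log_le_log hT0 (by linarith)
  have hq : (0:ℝ) ≤ q / (1 + T) := by positivity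
  rw [hftc] at hmono
  norm_num at hmono
  unfold sdiH
  linarith [hmono]

lemma inner_eq (q : ℕ) {r : ℝ} (β : ℝ) (hr : 0 < r) :
    (∫ s in (0:ℝ)..β, s ^ q * (r ^ 2 + s ^ 2) ^ (-((q:ℝ) + 1) / 2)) = sdiH q (β / r) := by
  set e : ℝ := -((q:ℝ) + 1) / 2 with he
  have hg : Continuous (fun s : ℝ => s ^ q * (r ^ 2 + s ^ 2) ^ e) := by
    apply (continuous_pow q).mul
    apply Continuous.rpow_const (by continuity)
    intro x; left; positivity
  have key := intervalIntegral.integral_comp_smul_deriv (a := (0:ℝ)) (b := β / r)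
      (f := fun x => r * x) (f' := fun _ => r)
      (g := fun s => s ^ q * (r ^ 2 + s ^ 2) ^ e)
      (fun x _ => by simpa using (hasDerivAt_id x).const_mul r) continuousOn_const hg
  simp only [Function.comp] at key
  have hb : r * (β / r) = β := by field_simp
  rw [mul_zero, hb] at key
  rw [← key, sdiH]
  apply intervalIntegral.integral_congr
  intro x _
  show r • ((r * x) ^ q * (r ^ 2 + (r * x) ^ 2) ^ e) = sdiPhi q x
  rw [eq_comm]
  have h1 : r ^ 2 + (r * x) ^ 2 = r ^ 2 * (1 + x ^ 2) := by ring
  have h2 : (r ^ 2) ^ e = (r ^ (q + 1))⁻¹ := by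
    rw [sq_rpow hr.le, show 2 * e = -((q:ℝ) + 1) by rw [he]; ring, Real.rpow_neg hr.le,
      show ((q:ℝ) + 1) = ((q + 1 : ℕ) : ℝ) by push_cast; ring, Real.rpow_natCast]
  rw [h1, Real.mul_rpow (by positivity) (by positivity), h2, smul_eq_mul, mul_pow, sdiPhi]
  have hrq : (r : ℝ) ^ (q + 1) ≠ 0 := by positivity
  rw [← he]
  field_simp
  ring

lemma intInt_pow_log {p : ℕ} {x : ℝ} (hx : 0 < x) :
    IntervalIntegrable (fun r : ℝ => r ^ p * Real.log r) volume 0 x := by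
  have hg : IntervalIntegrable
      (fun r : ℝ => x ^ p * (2 * r ^ (-(1/2) : ℝ) + |Real.log x|)) volume 0 x := by
    apply IntervalIntegrable.const_mul
    apply IntervalIntegrable.add
    · exact (intervalIntegral.intervalIntegrable_rpow' (by norm_num)).const_mul 2
    · exact intervalIntegrable_const
  apply hg.mono_fun
  · exact ((measurable_id.pow_const p).mul Real.measurable_log).aestronglyMeasurable
  · rw [Set.uIoc_of_le hx.le, Filter.EventuallyLE,
      MeasureTheory.ae_restrict_iff' measurableSet_Ioc]
    apply Filter.Eventually.of_forall
    intro r hr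
    have hr0 : 0 < r := hr.1
    have hrx : r ≤ x := hr.2
    have hrp : r ^ p ≤ x ^ p := pow_le_pow_left₀ hr0.le hrx p
    have hrpn : (0:ℝ) ≤ r ^ p := by positivity
    have hbig : (0:ℝ) ≤ 2 * r ^ (-(1/2) : ℝ) := by positivity
    rw [Real.norm_eq_abs, Real.norm_eq_abs, abs_mul, abs_of_nonneg hrpn]
    have hrhs : |x ^ p * (2 * r ^ (-(1/2) : ℝ) + |Real.log x|)|
        = x ^ p * (2 * r ^ (-(1/2) : ℝ) + |Real.log x|) := by
      apply abs_of_nonneg; positivity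
    rw [hrhs]
    rcases le_or_gt r 1 with h1 | h1
    · have hlog : |Real.log r| ≤ 2 * r ^ (-(1/2) : ℝ) := by
        have hlr : Real.log r ≤ 0 := Real.log_nonpos hr0.le h1
        rw [abs_of_nonpos hlr]
        have hkey : Real.log (r ^ (-(1/2) : ℝ)) ≤ r ^ (-(1/2) : ℝ) - 1 :=
          Real.log_le_sub_one_of_pos (Real.rpow_pos_of_pos hr0 _)
        rw [Real.log_rpow hr0] at hkey
        have hge1 : (0:ℝ) ≤ r ^ (-(1/2) : ℝ) := (Real.rpow_pos_of_pos hr0 _).le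
        nlinarith
      calc r ^ p * |Real.log r| ≤ x ^ p * (2 * r ^ (-(1/2) : ℝ)) :=
            mul_le_mul hrp hlog (abs_nonneg _) (by positivity)
        _ ≤ _ := by nlinarith [abs_nonneg (Real.log x), pow_nonneg (le_of_lt hx) p]
    · have hlog : |Real.log r| ≤ |Real.log x| := by
        rw [abs_of_nonneg (Real.log_nonneg h1.le),
          abs_of_nonneg (Real.log_nonneg (h1.le.trans hrx))]
        exact Real.log_le_log hr0 hrx
      calc r ^ p * |Real.log r| ≤ x ^ p * |Real.log x| :=
            mul_le_mul hrp hlog (abs_nonneg _) (by positivity)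
        _ ≤ _ := by nlinarith [pow_nonneg (le_of_lt hx) p]

lemma integral_pow_mul_log {p : ℕ} {x : ℝ} (hx : 0 < x) :
    ∫ r in (0:ℝ)..x, r ^ p * Real.log r
      = x ^ (p+1) * Real.log x / (p+1) - x ^ (p+1) / ((p+1)^2 : ℝ) := by
  set F : ℝ → ℝ := fun r => r ^ (p+1) * Real.log r / (p+1) - r ^ (p+1) / ((p+1)^2 : ℝ) with hF
  have hF0 : F 0 = 0 := by simp [hF]
  have hcont : ContinuousOn F (Set.Icc 0 x) := by
    intro y hy
    rcases eq_or_ne y 0 with rfl | hy0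
    · rw [ContinuousWithinAt, hF0]
      have h1 : Filter.Tendsto F (nhdsWithin 0 (Set.Ioi 0)) (nhds 0) := by
        have ha : Filter.Tendsto (fun r : ℝ => Real.log r * r ^ ((p+1 : ℕ) : ℝ))
            (nhdsWithin 0 (Set.Ioi 0)) (nhds 0) :=
          tendsto_log_mul_rpow_nhdsGT_zero (by positivity)
        have hb : Filter.Tendsto (fun r : ℝ => r ^ (p+1) / ((p+1)^2 : ℝ))
            (nhdsWithin 0 (Set.Ioi 0)) (nhds 0) := by
          have := ((continuous_pow (p+1)).tendsto 0).div_const (((p:ℝ)+1)^2)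
          simp only [zero_pow (Nat.succ_ne_zero p), zero_div] at this
          exact this.mono_left nhdsWithin_le_nhds
        have := (ha.div_const ((p:ℝ)+1)).sub hb
        simp only [zero_div, zero_sub, neg_zero, sub_zero] at this
        apply this.congr
        intro r
        simp only [hF, Real.rpow_natCast]
        push_cast
        ring
      have h2 : Filter.Tendsto F (pure (0:ℝ)) (nhds 0) := by
        have := tendsto_pure_nhds F 0
        rwa [hF0] at this
      have h3 : Filter.Tendsto F (nhdsWithin 0 (Set.Ioi 0) ⊔ pure 0) (nhds 0) := by
        rw [Filter.tendsto_sup]; exact ⟨h1, h2⟩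
      apply h3.mono_left
      calc nhdsWithin (0:ℝ) (Set.Icc 0 x) ≤ nhdsWithin 0 (Set.Ioi 0 ∪ {0}) := by
            apply nhdsWithin_mono
            intro z hz
            rcases eq_or_lt_of_le hz.1 with h | h
            · exact Or.inr (by simp [← h])
            · exact Or.inl h
        _ = _ := by rw [nhdsWithin_union, nhdsWithin_singleton]
    · exact (ContinuousAt.continuousWithinAt (by
        apply ContinuousAt.sub
        · exact ((continuousAt_pow _ _).mul (Real.continuousAt_log hy0)).div_const _
        · exact (continuousAt_pow _ _).div_const _))
  have hderiv : ∀ y ∈ Set.Ioo 0 x, HasDerivWithinAt F (y ^ p * Real.log y) (Set.Ioi y) y := by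
    intro y hy
    have hy0 : 0 < y := hy.1
    have hd : HasDerivAt F (y ^ p * Real.log y) y := by
      have h1 := (hasDerivAt_pow (p+1) y).mul (Real.hasDerivAt_log hy0.ne')
      have h2 := h1.div_const ((p:ℝ)+1)
      have h3 := (hasDerivAt_pow (p+1) y).div_const (((p:ℝ)+1)^2)
      have h4 := h2.sub h3
      refine h4.congr_deriv ?_
      simp only [Nat.add_sub_cancel]
      push_cast
      field_simp
      ring
    exact hd.hasDerivWithinAt
  have hint : IntervalIntegrable (fun r : ℝ => r ^ p * Real.log r) volume 0 x := intInt_pow_log hx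
  have hkey := intervalIntegral.integral_eq_sub_of_hasDeriv_right_of_le hx.le hcont hderiv hint
  rw [hkey, hF0, sub_zero]

lemma integral_pow_mul_const_sub_log {p : ℕ} {x c : ℝ} (hx : 0 < x) :
    ∫ r in (0:ℝ)..x, r ^ p * (c - Real.log r)
      = x ^ (p+1) / (p+1) * (c - Real.log x + 1/(p+1)) := by
  have h1 : IntervalIntegrable (fun r : ℝ => c * r ^ p) volume 0 x :=
    (continuous_const.mul (continuous_pow p)).intervalIntegrable _ _
  have h2 := intInt_pow_log (p := p) hx
  have h : (fun r : ℝ => r ^ p * (c - Real.log r))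
      = fun r => c * r ^ p - r ^ p * Real.log r := by funext r; ring
  rw [h, intervalIntegral.integral_sub h1 h2, intervalIntegral.integral_const_mul,
    integral_pow, integral_pow_mul_log hx]
  have hp : ((p:ℝ)+1) ≠ 0 := by positivity
  rw [zero_pow (Nat.succ_ne_zero p)]
  push_cast
  field_simp
  ring

lemma intInt_pow_const_sub_log {p : ℕ} {x c : ℝ} (hx : 0 < x) :
    IntervalIntegrable (fun r : ℝ => r ^ p * (c - Real.log r)) volume 0 x := by
  have h : (fun r : ℝ => r ^ p * (c - Real.log r))
      = fun r => c * r ^ p - r ^ p * Real.log r := by funext r; ring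
  rw [h]
  exact ((continuous_const.mul (continuous_pow p)).intervalIntegrable _ _).sub (intInt_pow_log hx)

lemma outer_bounds {p q : ℕ} {β x : ℝ} (hx : 0 < x) (hxβ : x ≤ β) :
    x ^ (p+1) / (p+1) * ((Real.log β - q) - Real.log x + 1/(p+1))
      ≤ (∫ r in (0:ℝ)..x, r ^ p * ∫ s in (0:ℝ)..β, s ^ q * (r^2+s^2) ^ (-((q:ℝ)+1)/2))
    ∧ (∫ r in (0:ℝ)..x, r ^ p * ∫ s in (0:ℝ)..β, s ^ q * (r^2+s^2) ^ (-((q:ℝ)+1)/2))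
      ≤ x ^ (p+1) / (p+1) * ((Real.log β + 1/(q+1)) - Real.log x + 1/(p+1)) := by
  have hβ0 : 0 < β := lt_of_lt_of_le hx hxβ
  set e : ℝ := -((q:ℝ)+1)/2 with he
  set W : ℝ → ℝ := fun r => r ^ p * ∫ s in (0:ℝ)..β, s ^ q * (r^2+s^2) ^ e with hW
  have hWeq : ∀ r ∈ Set.Ioc (0:ℝ) x, W r = r ^ p * sdiH q (β / r) := by
    intro r hr
    rw [hW]
    simp only
    rw [inner_eq q β hr.1]
  have hT1 : ∀ r ∈ Set.Ioc (0:ℝ) x, 1 ≤ β / r := fun r hr =>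
    (one_le_div hr.1).mpr (le_trans hr.2 hxβ)
  have hlogdiv : ∀ r ∈ Set.Ioc (0:ℝ) x, Real.log (β / r) = Real.log β - Real.log r :=
    fun r hr => Real.log_div hβ0.ne' hr.1.ne'
  have hlb : ∀ r ∈ Set.Ioc (0:ℝ) x, r ^ p * ((Real.log β - q) - Real.log r) ≤ W r := by
    intro r hr
    rw [hWeq r hr]
    have h := sdiH_ge q (hT1 r hr)
    rw [hlogdiv r hr] at h
    exact mul_le_mul_of_nonneg_left (by linarith) (pow_nonneg hr.1.le p)
  have hub : ∀ r ∈ Set.Ioc (0:ℝ) x, W r ≤ r ^ p * ((Real.log β + 1/(q+1)) - Real.log r) := by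
    intro r hr
    rw [hWeq r hr]
    have h := sdiH_le q (hT1 r hr)
    rw [hlogdiv r hr] at h
    exact mul_le_mul_of_nonneg_left (by linarith) (pow_nonneg hr.1.le p)
  have hcontW : ContinuousOn W (Set.Ioc 0 x) := by
    have hg : ContinuousOn (fun r : ℝ => r ^ p * sdiH q (β / r)) (Set.Ioc 0 x) := by
      apply ContinuousOn.mul (continuous_pow p).continuousOn
      apply (sdiH_cont q).comp_continuousOn
      exact continuousOn_const.div continuousOn_id (fun r hr => hr.1.ne')
    exact hg.congr hWeq
  have hU : IntervalIntegrable
      (fun r : ℝ => r ^ p * ((Real.log β + 1/(q+1)) - Real.log r)) volume 0 x :=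
    intInt_pow_const_sub_log hx
  have hL : IntervalIntegrable
      (fun r : ℝ => r ^ p * ((Real.log β - q) - Real.log r)) volume 0 x :=
    intInt_pow_const_sub_log hx
  have hWnn : ∀ r ∈ Set.Ioc (0:ℝ) x, 0 ≤ W r := by
    intro r hr
    rw [hWeq r hr]
    exact mul_nonneg (pow_nonneg hr.1.le p) (sdiH_nonneg q (div_nonneg hβ0.le hr.1.le))
  have hWint : IntervalIntegrable W volume 0 x := by
    rw [intervalIntegrable_iff_integrableOn_Ioc_of_le hx.le]
    apply MeasureTheory.Integrable.mono'
      ((intervalIntegrable_iff_integrableOn_Ioc_of_le hx.le).mp hU)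
      (hcontW.aestronglyMeasurable measurableSet_Ioc)
    rw [MeasureTheory.ae_restrict_iff' measurableSet_Ioc]
    apply Filter.Eventually.of_forall
    intro r hr
    rw [Real.norm_eq_abs, abs_of_nonneg (hWnn r hr)]
    exact hub r hr
  constructor
  · rw [← integral_pow_mul_const_sub_log (c := Real.log β - q) hx,
      intervalIntegral.integral_of_le hx.le, intervalIntegral.integral_of_le hx.le]
    exact MeasureTheory.setIntegral_mono_on
      ((intervalIntegrable_iff_integrableOn_Ioc_of_le hx.le).mp hL)
      ((intervalIntegrable_iff_integrableOn_Ioc_of_le hx.le).mp hWint)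
      measurableSet_Ioc hlb
  · rw [← integral_pow_mul_const_sub_log (c := Real.log β + 1/(q+1)) hx,
      intervalIntegral.integral_of_le hx.le, intervalIntegral.integral_of_le hx.le]
    exact MeasureTheory.setIntegral_mono_on
      ((intervalIntegrable_iff_integrableOn_Ioc_of_le hx.le).mp hWint)
      ((intervalIntegrable_iff_integrableOn_Ioc_of_le hx.le).mp hU)
      measurableSet_Ioc hub

lemma tendsto_ratio (A B : ℝ) :
    Filter.Tendsto (fun y : ℝ => (y + A) / (y + B)) Filter.atTop (nhds 1) := by
  have h2 : Filter.Tendsto (fun y : ℝ => (y + B)⁻¹) Filter.atTop (nhds 0) :=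
    (Filter.tendsto_atTop_add_const_right _ B Filter.tendsto_id).inv_tendsto_atTop
  have h1 : Filter.Tendsto (fun y : ℝ => 1 + (A - B) * (y + B)⁻¹) Filter.atTop (nhds 1) := by
    have := (h2.const_mul (A - B)).const_add 1
    simpa using this
  apply h1.congr'
  filter_upwards [Filter.eventually_gt_atTop (-B)] with y hy
  have hyB : y + B ≠ 0 := by linarith
  field_simp
  ring

theorem sharpness_double_integral_limit (n k i : ℕ) (hi : 1 ≤ i) (hik : i < k) (hkn : k ≤ n)
    (t : ℝ) (ht1 : -(((n : ℝ) - i) / ((n : ℝ) + 1)) < t) (ht2 : t < ((i : ℝ) + 1) / ((n : ℝ) + 1)) :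
    Filter.Tendsto (fun ε : ℝ =>
        (∫ r₁ in (0 : ℝ)..(ε * (((i : ℝ) + 1) / ((n : ℝ) + 1))),
            r₁ ^ (i - 1) *
              ∫ r₂ in (0 : ℝ)..(((n : ℝ) - i) / ((n : ℝ) + 1)),
                r₂ ^ (k - i - 1) * (r₁ ^ 2 + r₂ ^ 2) ^ (((i : ℝ) - k) / 2)) /
          (∫ r₁ in (0 : ℝ)..(ε * (((i : ℝ) + 1) / ((n : ℝ) + 1) - t)),
            r₁ ^ (i - 1) *
              ∫ r₂ in (0 : ℝ)..(((n : ℝ) - i) / ((n : ℝ) + 1) + t),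
                r₂ ^ (k - i - 1) * (r₁ ^ 2 + r₂ ^ 2) ^ (((i : ℝ) - k) / 2)))
      (nhdsWithin 0 (Set.Ioi 0))
      (nhds (((((i : ℝ) + 1) / ((n : ℝ) + 1)) / (((i : ℝ) + 1) / ((n : ℝ) + 1) - t)) ^ i)) := by
  set p : ℕ := i - 1 with hp
  set q : ℕ := k - i - 1 with hq
  have hpi : p + 1 = i := by omega
  have hpiR : (p : ℝ) + 1 = (i : ℝ) := by exact_mod_cast hpi
  have hkiq : (k : ℝ) = (i : ℝ) + (q : ℝ) + 1 := by
    have : i + q + 1 = k := by omega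
    exact_mod_cast this.symm
  have hexp : ((i : ℝ) - k) / 2 = -((q : ℝ) + 1) / 2 := by rw [hkiq]; ring
  simp only [hexp]
  set a₀ : ℝ := ((i : ℝ) + 1) / ((n : ℝ) + 1) with ha₀
  set b₀ : ℝ := ((n : ℝ) - i) / ((n : ℝ) + 1) with hb₀
  set a : ℝ := a₀ - t with ha
  set b : ℝ := b₀ + t with hb
  have hn1 : (0:ℝ) < (n : ℝ) + 1 := by positivity
  have ha₀pos : 0 < a₀ := by rw [ha₀]; positivity
  have hb₀pos : 0 < b₀ := by
    rw [hb₀]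
    apply div_pos _ hn1
    have : (i:ℝ) < (n:ℝ) := by exact_mod_cast lt_of_lt_of_le hik hkn
    linarith
  have hapos : 0 < a := by rw [ha]; linarith
  have hbpos : 0 < b := by rw [hb]; linarith
  have hiR : (0:ℝ) < (i:ℝ) := by exact_mod_cast hi
  -- the four constants
  set P₁ : ℝ := Real.log b₀ - (q:ℝ) + 1/(i:ℝ) - Real.log a₀ with hP₁
  set Q₁ : ℝ := Real.log b₀ + 1/((q:ℝ)+1) + 1/(i:ℝ) - Real.log a₀ with hQ₁
  set P₂ : ℝ := Real.log b - (q:ℝ) + 1/(i:ℝ) - Real.log a with hP₂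
  set Q₂ : ℝ := Real.log b + 1/((q:ℝ)+1) + 1/(i:ℝ) - Real.log a with hQ₂
  have hy : Filter.Tendsto (fun ε : ℝ => -Real.log ε) (nhdsWithin 0 (Set.Ioi 0))
      Filter.atTop := by
    apply Filter.Tendsto.comp tendsto_neg_atBot_atTop Real.tendsto_log_nhdsGT_zero
  have hlimval : (a₀ / a) ^ i = a₀^i/a^i * 1 := by rw [mul_one, div_pow]
  rw [hlimval]
  have hlo : Filter.Tendsto
      (fun ε : ℝ => a₀^i/a^i * ((-Real.log ε + P₁) / (-Real.log ε + Q₂)))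
      (nhdsWithin 0 (Set.Ioi 0)) (nhds (a₀^i/a^i * 1)) :=
    (((tendsto_ratio P₁ Q₂).comp hy).const_mul _)
  have hhi : Filter.Tendsto
      (fun ε : ℝ => a₀^i/a^i * ((-Real.log ε + Q₁) / (-Real.log ε + P₂)))
      (nhdsWithin 0 (Set.Ioi 0)) (nhds (a₀^i/a^i * 1)) :=
    (((tendsto_ratio Q₁ P₂).comp hy).const_mul _)
  -- eventual facts
  have hev0 : ∀ᶠ ε in nhdsWithin (0:ℝ) (Set.Ioi 0), 0 < ε := eventually_mem_nhdsWithin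
  have hevδ : ∀ᶠ ε in nhdsWithin (0:ℝ) (Set.Ioi 0), ε * a₀ ≤ b₀ ∧ ε * a ≤ b := by
    have hδpos : 0 < min (b₀/a₀) (b/a) := lt_min (div_pos hb₀pos ha₀pos) (div_pos hbpos hapos)
    have hmem : Set.Ioo (0:ℝ) (min (b₀/a₀) (b/a)) ∈ nhdsWithin (0:ℝ) (Set.Ioi 0) :=
      Ioo_mem_nhdsGT_of_mem ⟨le_refl 0, hδpos⟩
    filter_upwards [hmem] with ε hε
    constructor
    · have h1 : ε < b₀/a₀ := lt_of_lt_of_le hε.2 (min_le_left _ _)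
      rw [lt_div_iff₀ ha₀pos] at h1
      linarith
    · have h1 : ε < b/a := lt_of_lt_of_le hε.2 (min_le_right _ _)
      rw [lt_div_iff₀ hapos] at h1
      linarith
  have hev1 : ∀ᶠ ε in nhdsWithin (0:ℝ) (Set.Ioi 0), 0 < -Real.log ε + P₁ := by
    filter_upwards [hy.eventually_gt_atTop (-P₁)] with ε hε
    linarith
  have hev2 : ∀ᶠ ε in nhdsWithin (0:ℝ) (Set.Ioi 0), 0 < -Real.log ε + P₂ := by
    filter_upwards [hy.eventually_gt_atTop (-P₂)] with ε hε
    linarith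
  have hqq : -(q:ℝ) ≤ 1/((q:ℝ)+1) := by
    have h0 : (0:ℝ) ≤ (q:ℝ) := Nat.cast_nonneg q
    have h1 : (0:ℝ) < 1/((q:ℝ)+1) := by positivity
    linarith
  have hPQ1 : P₁ ≤ Q₁ := by rw [hP₁, hQ₁]; linarith
  have hPQ2 : P₂ ≤ Q₂ := by rw [hP₂, hQ₂]; linarith
  have hmain : ∀ᶠ ε in nhdsWithin (0:ℝ) (Set.Ioi 0),
      (a₀^i/a^i * ((-Real.log ε + P₁) / (-Real.log ε + Q₂)) ≤
        (∫ r₁ in (0 : ℝ)..(ε * a₀), r₁ ^ p *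
            ∫ r₂ in (0 : ℝ)..b₀, r₂ ^ q * (r₁ ^ 2 + r₂ ^ 2) ^ (-((q:ℝ) + 1) / 2)) /
          (∫ r₁ in (0 : ℝ)..(ε * a), r₁ ^ p *
            ∫ r₂ in (0 : ℝ)..b, r₂ ^ q * (r₁ ^ 2 + r₂ ^ 2) ^ (-((q:ℝ) + 1) / 2)))
      ∧ ((∫ r₁ in (0 : ℝ)..(ε * a₀), r₁ ^ p *
            ∫ r₂ in (0 : ℝ)..b₀, r₂ ^ q * (r₁ ^ 2 + r₂ ^ 2) ^ (-((q:ℝ) + 1) / 2)) /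
          (∫ r₁ in (0 : ℝ)..(ε * a), r₁ ^ p *
            ∫ r₂ in (0 : ℝ)..b, r₂ ^ q * (r₁ ^ 2 + r₂ ^ 2) ^ (-((q:ℝ) + 1) / 2)) ≤
        a₀^i/a^i * ((-Real.log ε + Q₁) / (-Real.log ε + P₂))) := by
    filter_upwards [hev0, hevδ, hev1, hev2] with ε hε0 hεδ hy1 hy2
    have hx1 : 0 < ε * a₀ := mul_pos hε0 ha₀pos
    have hx2 : 0 < ε * a := mul_pos hε0 hapos
    obtain ⟨hN1, hN2⟩ := outer_bounds (p := p) (q := q) hx1 hεδ.1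
    obtain ⟨hD1, hD2⟩ := outer_bounds (p := p) (q := q) hx2 hεδ.2
    have hlogε1 : Real.log (ε * a₀) = Real.log ε + Real.log a₀ :=
      Real.log_mul hε0.ne' ha₀pos.ne'
    have hlogε2 : Real.log (ε * a) = Real.log ε + Real.log a :=
      Real.log_mul hε0.ne' hapos.ne'
    have heqN1 : (ε*a₀)^(p+1)/((p:ℝ)+1) *
        ((Real.log b₀ - (q:ℝ)) - Real.log (ε*a₀) + 1/((p:ℝ)+1))
        = ε^i*a₀^i/(i:ℝ) * (-Real.log ε + P₁) := by
      rw [hpi, hpiR, mul_pow, hlogε1, hP₁]; ring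
    have heqN2 : (ε*a₀)^(p+1)/((p:ℝ)+1) *
        ((Real.log b₀ + 1/((q:ℝ)+1)) - Real.log (ε*a₀) + 1/((p:ℝ)+1))
        = ε^i*a₀^i/(i:ℝ) * (-Real.log ε + Q₁) := by
      rw [hpi, hpiR, mul_pow, hlogε1, hQ₁]; ring
    have heqD1 : (ε*a)^(p+1)/((p:ℝ)+1) *
        ((Real.log b - (q:ℝ)) - Real.log (ε*a) + 1/((p:ℝ)+1))
        = ε^i*a^i/(i:ℝ) * (-Real.log ε + P₂) := by
      rw [hpi, hpiR, mul_pow, hlogε2, hP₂]; ring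
    have heqD2 : (ε*a)^(p+1)/((p:ℝ)+1) *
        ((Real.log b + 1/((q:ℝ)+1)) - Real.log (ε*a) + 1/((p:ℝ)+1))
        = ε^i*a^i/(i:ℝ) * (-Real.log ε + Q₂) := by
      rw [hpi, hpiR, mul_pow, hlogε2, hQ₂]; ring
    rw [heqN1] at hN1
    rw [heqN2] at hN2
    rw [heqD1] at hD1
    rw [heqD2] at hD2
    have hipos : (0:ℝ) < ε^i*a₀^i/(i:ℝ) := by positivity
    have hipos2 : (0:ℝ) < ε^i*a^i/(i:ℝ) := by positivity
    have hDlo : 0 < ε^i*a^i/(i:ℝ) * (-Real.log ε + P₂) := mul_pos hipos2 hy2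
    have hDpos : 0 < (∫ r₁ in (0 : ℝ)..(ε * a), r₁ ^ p *
        ∫ r₂ in (0 : ℝ)..b, r₂ ^ q * (r₁ ^ 2 + r₂ ^ 2) ^ (-((q:ℝ) + 1) / 2)) :=
      lt_of_lt_of_le hDlo hD1
    have hNlo : 0 < ε^i*a₀^i/(i:ℝ) * (-Real.log ε + P₁) := mul_pos hipos hy1
    have h1 : (ε:ℝ)^i ≠ 0 := by positivity
    have h2 : (a:ℝ)^i ≠ 0 := by positivity
    have h3 : (i:ℝ) ≠ 0 := hiR.ne'
    constructor
    · have hq2 : 0 < -Real.log ε + Q₂ := by linarith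
      have hstep := div_le_div₀ (le_trans hNlo.le hN1) hN1 hDpos hD2
      have hcalc : ε^i*a₀^i/(i:ℝ) * (-Real.log ε + P₁) / (ε^i*a^i/(i:ℝ) * (-Real.log ε + Q₂))
          = a₀^i/a^i * ((-Real.log ε + P₁)/(-Real.log ε + Q₂)) := by
        field_simp
      rw [← hcalc]
      exact hstep
    · have hq1 : 0 < -Real.log ε + Q₁ := by linarith
      have hUNn : 0 ≤ ε^i*a₀^i/(i:ℝ) * (-Real.log ε + Q₁) := (mul_pos hipos hq1).le
      have hstep := div_le_div₀ hUNn hN2 hDlo hD1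
      have hcalc : ε^i*a₀^i/(i:ℝ) * (-Real.log ε + Q₁) / (ε^i*a^i/(i:ℝ) * (-Real.log ε + P₂))
          = a₀^i/a^i * ((-Real.log ε + Q₁)/(-Real.log ε + P₂)) := by
        field_simp
      rw [← hcalc]
      exact hstep
  exact tendsto_of_tendsto_of_tendsto_of_le_of_le' hlo hhi
    (hmain.mono fun ε h => h.1) (hmain.mono fun ε h => h.2)
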